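/- Let A be the free commutative (non-associative) algebra over ℚ on one generator X, and let J be the ideal of elements with no terms of degree < 5. Then the map φ : ℤ × ℤ → A/J given by (p,q) ↦ 1 + pX + C(p,2)X² + C(p,3)X³ + (C(p,4) − q)·(X³·X) + q·(X²·X²) is an injective multiplicative homomorphism from the loop L with product (p,q)·(p',q') = (p+p', q+q'+C(p,2)C(p',2)) to the multiplicative magma A/J, i.e. φ((p,q)·(p',q')) = φ(p,q)·φ(p',q') and φ is injective. -/

import Mathlib

/-- Binomial coefficients C(p,k) for arbitrary integers p. -/
def c2 (p : ℤ) : ℤ := p * (p - 1) / 2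
def c3 (p : ℤ) : ℤ := p * (p - 1) * (p - 2) / 6
def c4 (p : ℤ) : ℤ := p * (p - 1) * (p - 2) * (p - 3) / 24

/-- The product (p,q)·(p',q') = (p+p', q+q'+C(p,2)·C(p',2)). -/
def lmul4 (x y : ℤ × ℤ) : ℤ × ℤ := (x.1 + y.1, x.2 + y.2 + c2 x.1 * c2 y.1)

/-- The free unital non-associative ℚ-algebra on one generator X. -/
abbrev R1 : Type := Unitization ℚ (MonoidAlgebra ℚ (FreeMagma Unit))

/-- The congruence identifying xy with yx (commutativity) and killing all
monomials of degree ≥ 5; the quotient is the free commutative non-associative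
algebra A on one generator modulo the ideal J of elements with no terms of
degree < 5. -/
def relAJ : R1 → R1 → Prop := fun a b =>
  (∃ x y : R1, a = x * y ∧ b = y * x) ∨
  (∃ m : FreeMagma Unit, 5 ≤ m.length ∧
    a = Unitization.inr (MonoidAlgebra.single m (1 : ℚ)) ∧ b = 0)

/-- A/J as a quotient by the corresponding ring congruence. -/
abbrev AJ : Type := (ringConGen relAJ).Quotient

/-- The generator X of A/J. -/
noncomputable def XX : AJ :=
  ((Unitization.inr (MonoidAlgebra.single (FreeMagma.of ()) (1 : ℚ)) : R1) : AJ)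

/-- The map φ : L → A/J,
(p,q) ↦ 1 + pX + C(p,2)X² + C(p,3)X³ + (C(p,4)−q)·X³X + q·X²X². -/
noncomputable def phi (x : ℤ × ℤ) : AJ :=
  1 + (x.1 : AJ) * XX + (c2 x.1 : AJ) * (XX * XX)
    + (c3 x.1 : AJ) * (XX * XX * XX)
    + ((c4 x.1 - x.2 : ℤ) : AJ) * (XX * XX * XX * XX)
    + (x.2 : AJ) * ((XX * XX) * (XX * XX))

/-! ### Integer binomial identities -/

lemma two_dvd' (p : ℤ) : (2:ℤ) ∣ p * (p - 1) := by
  have : ((p * (p - 1) : ℤ) : ZMod 2) = 0 := by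
    push_cast
    exact (by decide : ∀ x : ZMod 2, x * (x - 1) = 0) _
  exact_mod_cast (ZMod.intCast_zmod_eq_zero_iff_dvd _ 2).mp this

lemma six_dvd' (p : ℤ) : (6:ℤ) ∣ p * (p - 1) * (p - 2) := by
  have : ((p * (p - 1) * (p - 2) : ℤ) : ZMod 6) = 0 := by
    push_cast
    exact (by decide : ∀ x : ZMod 6, x * (x - 1) * (x - 2) = 0) _
  exact_mod_cast (ZMod.intCast_zmod_eq_zero_iff_dvd _ 6).mp this

lemma twentyfour_dvd' (p : ℤ) : (24:ℤ) ∣ p * (p - 1) * (p - 2) * (p - 3) := by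
  have : ((p * (p - 1) * (p - 2) * (p - 3) : ℤ) : ZMod 24) = 0 := by
    push_cast
    exact (by decide : ∀ x : ZMod 24, x * (x - 1) * (x - 2) * (x - 3) = 0) _
  exact_mod_cast (ZMod.intCast_zmod_eq_zero_iff_dvd _ 24).mp this

lemma d2 (p : ℤ) : 2 * c2 p = p * (p - 1) := Int.mul_ediv_cancel' (two_dvd' p)
lemma d3 (p : ℤ) : 6 * c3 p = p * (p - 1) * (p - 2) := Int.mul_ediv_cancel' (six_dvd' p)
lemma d4 (p : ℤ) : 24 * c4 p = p * (p - 1) * (p - 2) * (p - 3) :=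
  Int.mul_ediv_cancel' (twentyfour_dvd' p)

lemma A2 (p p' : ℤ) : c2 (p + p') = c2 p + c2 p' + p * p' := by
  apply mul_left_cancel₀ (a := (2:ℤ)) two_ne_zero
  linear_combination d2 (p + p') - d2 p - d2 p'

lemma A3 (p p' : ℤ) : c3 (p + p') = c3 p + c3 p' + c2 p * p' + p * c2 p' := by
  apply mul_left_cancel₀ (a := (6:ℤ)) (by norm_num)
  linear_combination d3 (p + p') - d3 p - d3 p' - 3 * p' * d2 p - 3 * p * d2 p'

lemma A4 (p p' : ℤ) :
    c4 (p + p') = c4 p + c4 p' + c3 p * p' + p * c3 p' + c2 p * c2 p' := by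
  apply mul_left_cancel₀ (a := (24:ℤ)) (by norm_num)
  linear_combination d4 (p + p') - d4 p - d4 p' - 4 * p' * d3 p - 4 * p * d3 p'
    - 12 * c2 p' * d2 p - 6 * p * (p - 1) * d2 p'

/-! ### Computation rules in AJ -/

noncomputable def M (m : FreeMagma Unit) : AJ :=
  ((Unitization.inr (MonoidAlgebra.single m (1 : ℚ)) : R1) : AJ)

lemma inr_single_mul (m n : FreeMagma Unit) :
    (Unitization.inr (MonoidAlgebra.single m (1:ℚ)) : R1) *
      Unitization.inr (MonoidAlgebra.single n (1:ℚ)) =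
      Unitization.inr (MonoidAlgebra.single (m * n) (1:ℚ)) := by
  refine Unitization.ext ?_ ?_ <;>
    simp [MonoidAlgebra.single_mul_single]

lemma M_mul (m n : FreeMagma Unit) : M m * M n = M (m * n) := by
  unfold M
  rw [← RingCon.coe_mul, inr_single_mul]

lemma AJ.comm (a b : AJ) : a * b = b * a := by
  obtain ⟨x, rfl⟩ := Quotient.exists_rep a
  obtain ⟨y, rfl⟩ := Quotient.exists_rep b
  show ((x * y : R1) : AJ) = ((y * x : R1) : AJ)
  exact (RingCon.eq (ringConGen relAJ)).mpr
    (RingConGen.Rel.of _ _ (Or.inl ⟨x, y, rfl, rfl⟩))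

lemma M_zero {m : FreeMagma Unit} (h : 5 ≤ m.length) : M m = 0 := by
  show (((Unitization.inr (MonoidAlgebra.single m (1:ℚ))) : R1) : AJ) = ((0 : R1) : AJ)
  exact (RingCon.eq (ringConGen relAJ)).mpr
    (RingConGen.Rel.of _ _ (Or.inr ⟨m, h, rfl, rfl⟩))

lemma bigz {a b : FreeMagma Unit} (h : 5 ≤ a.length + b.length) : M a * M b = 0 := by
  rw [M_mul]
  exact M_zero h

def w1 : FreeMagma Unit := FreeMagma.of ()

lemma hX : XX = M w1 := rfl
lemma h2 : XX * XX = M (w1 * w1) := M_mul w1 w1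
lemma h3 : XX * XX * XX = M (w1 * w1 * w1) := by rw [h2, hX, M_mul]
lemma h4 : XX * XX * XX * XX = M (w1 * w1 * w1 * w1) := by rw [h3, hX, M_mul]
lemma hy : (XX * XX) * (XX * XX) = M ((w1 * w1) * (w1 * w1)) := by rw [h2, M_mul]

-- products resulting in basis elements
lemma l11 : M w1 * M w1 = M (w1 * w1) := M_mul _ _
lemma l12 : M w1 * M (w1 * w1) = M (w1 * w1 * w1) := by rw [AJ.comm, M_mul]
lemma l21 : M (w1 * w1) * M w1 = M (w1 * w1 * w1) := M_mul _ _
lemma l13 : M w1 * M (w1 * w1 * w1) = M (w1 * w1 * w1 * w1) := by rw [AJ.comm, M_mul]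
lemma l31 : M (w1 * w1 * w1) * M w1 = M (w1 * w1 * w1 * w1) := M_mul _ _
lemma l22 : M (w1 * w1) * M (w1 * w1) = M ((w1 * w1) * (w1 * w1)) := M_mul _ _

-- vanishing products
lemma z14 : M w1 * M (w1 * w1 * w1 * w1) = 0 := bigz (by decide)
lemma z41 : M (w1 * w1 * w1 * w1) * M w1 = 0 := bigz (by decide)
lemma z1y : M w1 * M ((w1 * w1) * (w1 * w1)) = 0 := bigz (by decide)
lemma zy1 : M ((w1 * w1) * (w1 * w1)) * M w1 = 0 := bigz (by decide)
lemma z23 : M (w1 * w1) * M (w1 * w1 * w1) = 0 := bigz (by decide)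
lemma z32 : M (w1 * w1 * w1) * M (w1 * w1) = 0 := bigz (by decide)
lemma z24 : M (w1 * w1) * M (w1 * w1 * w1 * w1) = 0 := bigz (by decide)
lemma z42 : M (w1 * w1 * w1 * w1) * M (w1 * w1) = 0 := bigz (by decide)
lemma z2y : M (w1 * w1) * M ((w1 * w1) * (w1 * w1)) = 0 := bigz (by decide)
lemma zy2 : M ((w1 * w1) * (w1 * w1)) * M (w1 * w1) = 0 := bigz (by decide)
lemma z33 : M (w1 * w1 * w1) * M (w1 * w1 * w1) = 0 := bigz (by decide)
lemma z34 : M (w1 * w1 * w1) * M (w1 * w1 * w1 * w1) = 0 := bigz (by decide)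
lemma z43 : M (w1 * w1 * w1 * w1) * M (w1 * w1 * w1) = 0 := bigz (by decide)
lemma z3y : M (w1 * w1 * w1) * M ((w1 * w1) * (w1 * w1)) = 0 := bigz (by decide)
lemma zy3 : M ((w1 * w1) * (w1 * w1)) * M (w1 * w1 * w1) = 0 := bigz (by decide)
lemma z44 : M (w1 * w1 * w1 * w1) * M (w1 * w1 * w1 * w1) = 0 := bigz (by decide)
lemma z4y : M (w1 * w1 * w1 * w1) * M ((w1 * w1) * (w1 * w1)) = 0 := bigz (by decide)
lemma zy4 : M ((w1 * w1) * (w1 * w1)) * M (w1 * w1 * w1 * w1) = 0 := bigz (by decide)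
lemma zyy : M ((w1 * w1) * (w1 * w1)) * M ((w1 * w1) * (w1 * w1)) = 0 := bigz (by decide)

/-! ### smul lemmas in AJ -/

lemma AJ.smul_mul (n : ℤ) (x y : AJ) : (n • x) * y = n • (x * y) :=
  (AddMonoidHom.mulRight y).map_zsmul n x

lemma AJ.mul_smul (n : ℤ) (x y : AJ) : x * (n • y) = n • (x * y) :=
  (AddMonoidHom.mulLeft x).map_zsmul n y

lemma cast_mul_eq_zsmul (n : ℤ) (z : AJ) : (n : AJ) * z = n • z := by
  rw [show ((n : AJ)) = n • (1 : AJ) from (zsmul_one n).symm, AJ.smul_mul, one_mul]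

noncomputable def S (p q : ℤ) : AJ :=
  1 + p • M w1 + c2 p • M (w1 * w1) + c3 p • M (w1 * w1 * w1)
    + (c4 p - q) • M (w1 * w1 * w1 * w1) + q • M ((w1 * w1) * (w1 * w1))

lemma phi_eq (x : ℤ × ℤ) : phi x = S x.1 x.2 := by
  unfold phi S
  rw [cast_mul_eq_zsmul, cast_mul_eq_zsmul, cast_mul_eq_zsmul, cast_mul_eq_zsmul,
    cast_mul_eq_zsmul, hy, h4, h3, h2, hX]

lemma S_mul (p q p' q' : ℤ) :
    S p q * S p' q' = S (p + p') (q + q' + c2 p * c2 p') := by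
  unfold S
  simp only [mul_add, add_mul, one_mul, mul_one, AJ.smul_mul, AJ.mul_smul, smul_smul,
    l11, l12, l21, l13, l31, l22,
    z14, z41, z1y, zy1, z23, z32, z24, z42, z2y, zy2, z33, z34, z43,
    z3y, zy3, z44, z4y, zy4, zyy, smul_zero, add_zero]
  rw [A2 p p', A3 p p', A4 p p']
  module

/-! ### A 6-dimensional model -/

abbrev B6 : Type := Fin 6 → ℚ

def bmul (a b : B6) : B6 :=
  ![a 0 * b 0,
    a 0 * b 1 + a 1 * b 0,
    a 0 * b 2 + a 1 * b 1 + a 2 * b 0,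
    a 0 * b 3 + a 1 * b 2 + a 2 * b 1 + a 3 * b 0,
    a 0 * b 4 + a 1 * b 3 + a 3 * b 1 + a 4 * b 0,
    a 0 * b 5 + a 2 * b 2 + a 5 * b 0]

@[simp] lemma cons_val_five {α : Type*} (a b c d e f : α) :
    (![a, b, c, d, e, f] : Fin 6 → α) 5 = f := rfl

def bone : B6 := ![1, 0, 0, 0, 0, 0]
def be1 : B6 := ![0, 1, 0, 0, 0, 0]

lemma bmul_comm (a b : B6) : bmul a b = bmul b a := by
  funext i
  fin_cases i <;> simp [bmul] <;> ring

lemma bmul_add (a b c : B6) : bmul a (b + c) = bmul a b + bmul a c := by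
  funext i
  fin_cases i <;> simp [bmul] <;> ring

lemma add_bmul (a b c : B6) : bmul (a + b) c = bmul a c + bmul b c := by
  funext i
  fin_cases i <;> simp [bmul] <;> ring

lemma bmul_smul (r : ℚ) (a b : B6) : bmul a (r • b) = r • bmul a b := by
  funext i
  fin_cases i <;> simp [bmul] <;> ring

lemma smul_bmul (r : ℚ) (a b : B6) : bmul (r • a) b = r • bmul a b := by
  funext i
  fin_cases i <;> simp [bmul] <;> ring

lemma bmul_zero (a : B6) : bmul a 0 = 0 := by
  funext i; fin_cases i <;> simp [bmul]

lemma zero_bmul (a : B6) : bmul 0 a = 0 := by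
  funext i; fin_cases i <;> simp [bmul]

lemma bone_bmul (a : B6) : bmul bone a = a := by
  funext i; fin_cases i <;> simp [bmul, bone]

lemma bmul_bone (a : B6) : bmul a bone = a := by
  funext i; fin_cases i <;> simp [bmul, bone]

/-! ### grading -/

def wt : Fin 6 → ℕ := ![0, 1, 2, 3, 4, 4]

def homog (v : B6) (d : ℕ) : Prop := ∀ i, wt i ≠ d → v i = 0

lemma tz {u v : B6} {d e : ℕ} (hu : homog u d) (hv : homog v e) (j k : Fin 6)
    (h : wt j + wt k ≠ d + e) : u j * v k = 0 := by
  rcases eq_or_ne (wt j) d with h1 | h1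
  · rcases eq_or_ne (wt k) e with h2 | h2
    · exact absurd (by rw [h1, h2]) h
    · rw [hv k h2, mul_zero]
  · rw [hu j h1, zero_mul]

lemma bmul_homog {u v : B6} {d e : ℕ} (hu : homog u d) (hv : homog v e) :
    homog (bmul u v) (d + e) := by
  intro i hi
  fin_cases i
  · have h0 : (0 : ℕ) ≠ d + e := hi
    show u 0 * v 0 = 0
    exact tz hu hv 0 0 (by simp [wt]; exact h0)
  · have h0 : (1 : ℕ) ≠ d + e := hi
    show u 0 * v 1 + u 1 * v 0 = 0
    rw [tz hu hv 0 1 (by simp [wt]; exact h0), tz hu hv 1 0 (by simp [wt]; exact h0),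
      add_zero]
  · have h0 : (2 : ℕ) ≠ d + e := hi
    show u 0 * v 2 + u 1 * v 1 + u 2 * v 0 = 0
    rw [tz hu hv 0 2 (by simp [wt]; exact h0), tz hu hv 1 1 (by simp [wt]; omega),
      tz hu hv 2 0 (by simp [wt]; exact h0), add_zero, add_zero]
  · have h0 : (3 : ℕ) ≠ d + e := hi
    show u 0 * v 3 + u 1 * v 2 + u 2 * v 1 + u 3 * v 0 = 0
    rw [tz hu hv 0 3 (by simp [wt]; exact h0), tz hu hv 1 2 (by simp [wt]; omega),
      tz hu hv 2 1 (by simp [wt]; omega), tz hu hv 3 0 (by simp [wt]; exact h0),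
      add_zero, add_zero, add_zero]
  · have h0 : (4 : ℕ) ≠ d + e := hi
    show u 0 * v 4 + u 1 * v 3 + u 3 * v 1 + u 4 * v 0 = 0
    rw [tz hu hv 0 4 (by simp [wt]; exact h0), tz hu hv 1 3 (by simp [wt]; omega),
      tz hu hv 3 1 (by simp [wt]; omega), tz hu hv 4 0 (by simp [wt]; exact h0),
      add_zero, add_zero, add_zero]
  · have h0 : (4 : ℕ) ≠ d + e := hi
    show u 0 * v 5 + u 2 * v 2 + u 5 * v 0 = 0
    rw [tz hu hv 0 5 (by simp [wt]; exact h0), tz hu hv 2 2 (by simp [wt]; omega),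
      tz hu hv 5 0 (by simp [wt]; exact h0), add_zero, add_zero]


/-! ### the monomial evaluation -/

def mu : FreeMagma Unit → B6
  | FreeMagma.of _ => be1
  | FreeMagma.mul x y => bmul (mu x) (mu y)

lemma mu_homog : ∀ m : FreeMagma Unit, homog (mu m) m.length
  | FreeMagma.of _ => by
      intro i hi
      fin_cases i <;> first | rfl | exact absurd rfl hi
  | FreeMagma.mul x y => bmul_homog (mu_homog x) (mu_homog y)

lemma wt_le (i : Fin 6) : wt i ≤ 4 := by fin_cases i <;> simp [wt]

lemma mu_zero {m : FreeMagma Unit} (h : 5 ≤ m.length) : mu m = 0 :=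
  funext fun i => mu_homog m i (by have := wt_le i; omega)

noncomputable def linL : MonoidAlgebra ℚ (FreeMagma Unit) →ₗ[ℚ] B6 :=
  (Finsupp.lsum ℚ fun m => LinearMap.toSpanSingleton ℚ B6 (mu m)) ∘ₗ
    (MonoidAlgebra.coeffLinearEquiv ℚ).toLinearMap

lemma linL_single (m : FreeMagma Unit) (c : ℚ) :
    linL (MonoidAlgebra.single m c) = c • mu m := by
  show (Finsupp.lsum ℚ fun m => LinearMap.toSpanSingleton ℚ B6 (mu m)) (Finsupp.single m c) = c • mu m
  rw [Finsupp.lsum_single, LinearMap.toSpanSingleton_apply]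

lemma linL_mul (a b : MonoidAlgebra ℚ (FreeMagma Unit)) :
    linL (a * b) = bmul (linL a) (linL b) := by
  induction a using MonoidAlgebra.induction_linear with
  | zero => simp [zero_bmul]
  | add f g hf hg => simp only [add_mul, map_add, hf, hg, add_bmul]
  | single m c =>
    induction b using MonoidAlgebra.induction_linear with
    | zero => simp [bmul_zero]
    | add f g hf hg => simp only [mul_add, map_add, hf, hg, bmul_add]
    | single n d =>
      rw [MonoidAlgebra.single_mul_single, linL_single, linL_single, linL_single]
      show (c * d) • bmul (mu m) (mu n) = bmul (c • mu m) (d • mu n)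
      rw [smul_bmul, bmul_smul, smul_smul]

/-! ### the evaluation on R1 and AJ -/

noncomputable def fB (x : R1) : B6 := x.fst • bone + linL x.snd

lemma fB_add (x y : R1) : fB (x + y) = fB x + fB y := by
  simp only [fB, Unitization.fst_add, Unitization.snd_add, add_smul, map_add]
  abel

lemma fB_mul (x y : R1) : fB (x * y) = bmul (fB x) (fB y) := by
  simp only [fB, Unitization.fst_mul, Unitization.snd_mul, map_add, map_smul, linL_mul,
    bmul_add, add_bmul, bmul_smul, smul_bmul, bmul_bone, bone_bmul, smul_smul]
  module

lemma fB_zero : fB 0 = 0 := by simp [fB]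

lemma fB_compat (a b : R1) (h : RingConGen.Rel relAJ a b) : fB a = fB b := by
  induction h with
  | of x y hxy =>
    rcases hxy with ⟨u, v, rfl, rfl⟩ | ⟨m, hm, rfl, rfl⟩
    · rw [fB_mul, fB_mul, bmul_comm]
    · rw [fB_zero]
      show fB (Unitization.inr (MonoidAlgebra.single m (1:ℚ))) = 0
      simp [fB, linL_single, mu_zero hm]
  | refl x => rfl
  | symm _ ih => exact ih.symm
  | trans _ _ ih1 ih2 => exact ih1.trans ih2
  | add _ _ ih1 ih2 => rw [fB_add, fB_add, ih1, ih2]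
  | mul _ _ ih1 ih2 => rw [fB_mul, fB_mul, ih1, ih2]

noncomputable def FJ : AJ → B6 := Quotient.lift fB fB_compat

lemma FJ_coe (x : R1) : FJ ↑x = fB x := rfl

lemma FJ_add (a b : AJ) : FJ (a + b) = FJ a + FJ b := by
  obtain ⟨x, rfl⟩ := Quotient.exists_rep a
  obtain ⟨y, rfl⟩ := Quotient.exists_rep b
  exact fB_add x y

lemma FJ_mul (a b : AJ) : FJ (a * b) = bmul (FJ a) (FJ b) := by
  obtain ⟨x, rfl⟩ := Quotient.exists_rep a
  obtain ⟨y, rfl⟩ := Quotient.exists_rep b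
  exact fB_mul x y

noncomputable def FJhom : AJ →+ B6 := AddMonoidHom.mk' FJ FJ_add

lemma FJ_zsmul (n : ℤ) (a : AJ) : FJ (n • a) = n • FJ a :=
  map_zsmul FJhom n a

lemma FJ_one : FJ (1 : AJ) = bone := by
  show fB 1 = bone
  simp [fB, Unitization.fst_one, Unitization.snd_one]

lemma FJ_M (m : FreeMagma Unit) : FJ (M m) = mu m := by
  show fB (Unitization.inr (MonoidAlgebra.single m (1:ℚ))) = mu m
  simp [fB, linL_single]

def be2 : B6 := ![0, 0, 1, 0, 0, 0]
def be3 : B6 := ![0, 0, 0, 1, 0, 0]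
def be4 : B6 := ![0, 0, 0, 0, 1, 0]
def be5 : B6 := ![0, 0, 0, 0, 0, 1]

lemma mu1 : mu w1 = be1 := rfl
lemma mu2 : mu (w1 * w1) = be2 := by
  funext i; fin_cases i <;> simp [mu, bmul, be1, be2, w1]
lemma mu3 : mu (w1 * w1 * w1) = be3 := by
  have : mu (w1 * w1 * w1) = bmul (mu (w1 * w1)) (mu w1) := rfl
  rw [this, mu2, mu1]
  funext i; fin_cases i <;> simp [bmul, be1, be2, be3]
lemma mu4 : mu (w1 * w1 * w1 * w1) = be4 := by
  have : mu (w1 * w1 * w1 * w1) = bmul (mu (w1 * w1 * w1)) (mu w1) := rfl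
  rw [this, mu3, mu1]
  funext i; fin_cases i <;> simp [bmul, be1, be3, be4]
lemma mu5 : mu ((w1 * w1) * (w1 * w1)) = be5 := by
  have : mu ((w1 * w1) * (w1 * w1)) = bmul (mu (w1 * w1)) (mu (w1 * w1)) := rfl
  rw [this, mu2]
  funext i; fin_cases i <;> simp [bmul, be2, be5]

lemma FJ_S (p q : ℤ) :
    FJ (S p q) = ![1, (p : ℚ), (c2 p : ℚ), (c3 p : ℚ), (c4 p : ℚ) - (q : ℚ), (q : ℚ)] := by
  unfold S
  rw [FJ_add, FJ_add, FJ_add, FJ_add, FJ_add, FJ_zsmul, FJ_zsmul, FJ_zsmul, FJ_zsmul, FJ_zsmul,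
    FJ_one, FJ_M, FJ_M, FJ_M, FJ_M, FJ_M, mu1, mu2, mu3, mu4, mu5]
  funext i
  fin_cases i <;>
    simp [bone, be1, be2, be3, be4, be5, Int.cast_sub]


/-- φ is an injective multiplicative homomorphism from the loop
L = ℤ × ℤ with product (p,q)·(p',q') = (p+p', q+q'+C(p,2)C(p',2)) into the
multiplicative magma A/J. -/
theorem stmt7 :
    (∀ x y : ℤ × ℤ, phi (lmul4 x y) = phi x * phi y) ∧
    Function.Injective phi := by
  constructor
  · intro x y
    rw [phi_eq, phi_eq, phi_eq]
    exact (S_mul x.1 x.2 y.1 y.2).symm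
  · intro x y h
    rw [phi_eq, phi_eq] at h
    have hF := congrArg FJ h
    rw [FJ_S, FJ_S] at hF
    have h1 : (x.1 : ℚ) = (y.1 : ℚ) := by
      have := congrFun hF 1
      simpa using this
    have h5 : (x.2 : ℚ) = (y.2 : ℚ) := by
      have := congrFun hF 5
      simpa using this
    exact Prod.ext (by exact_mod_cast h1) (by exact_mod_cast h5)
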